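/- arXiv:1405.6691 — 3 statements merged into one kernel-verified Lean document; each statement's English description precedes it below -/
import Mathlib

section
/- Let 0 < α < 1 and equip ℝⁿ with the standard Euclidean inner product. If A ⊆ ℝⁿ \ {0} is a set such that the angle between any two distinct elements of A is at least α, then |A| ≤ C·α^{-(n-1)} for some constant C depending only on n. -/
open Metric MeasureTheory InnerProductGeometry Real Set RealInnerProductSpace ENNReal

private lemma aux_pow_sub_pow_le (m : ℕ) {a b : ℝ} (hb : 0 ≤ b) (hba : b ≤ a) (ha : a ≤ 2) :
    a ^ m - b ^ m ≤ m * 2 ^ m * (a - b) := by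
  induction m with
  | zero => simp
  | succ m ih =>
    have hbm : b ^ m ≤ 2 ^ m := pow_le_pow_left₀ hb (hba.trans ha) m
    have ham : b ^ m ≤ a ^ m := pow_le_pow_left₀ hb hba m
    have h2 : (0:ℝ) ≤ 2 ^ m := by positivity
    have hbn : 0 ≤ b ^ m := pow_nonneg hb m
    have key : a ^ (m+1) - b ^ (m+1) = a * (a^m - b^m) + (a - b) * b^m := by ring
    rw [key]
    have hX : 0 ≤ a ^ m - b ^ m := sub_nonneg.2 ham
    have hab : 0 ≤ a - b := sub_nonneg.2 hba
    have hm0 : (0:ℝ) ≤ (m:ℝ) := Nat.cast_nonneg m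
    have hih : 0 ≤ (m:ℝ) * 2 ^ m * (a - b) := by positivity
    have h1 : a * (a ^ m - b ^ m) ≤ 2 * ((m:ℝ) * 2 ^ m * (a - b)) := by
      calc a * (a ^ m - b ^ m) ≤ 2 * (a ^ m - b ^ m) := mul_le_mul_of_nonneg_right ha hX
        _ ≤ 2 * ((m:ℝ) * 2 ^ m * (a - b)) := by linarith
    have h2' : (a - b) * b ^ m ≤ (a - b) * 2 ^ m := mul_le_mul_of_nonneg_left hbm hab
    have h3 : 0 ≤ 2 ^ m * (a - b) := mul_nonneg h2 hab
    have h4 : ((m:ℝ) + 1) * 2 ^ (m + 1) * (a - b)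
        = 2 * ((m:ℝ) * 2 ^ m * (a - b)) + 2 * (2 ^ m * (a - b)) := by ring
    push_cast
    nlinarith

set_option maxHeartbeats 1000000 in
theorem stmt_2 (n : ℕ) :
    ∃ C : ℝ, 0 < C ∧ ∀ (α : ℝ), 0 < α → α < 1 →
      ∀ A : Set (EuclideanSpace ℝ (Fin n)),
        (0 : EuclideanSpace ℝ (Fin n)) ∉ A →
        (∀ u ∈ A, ∀ v ∈ A, u ≠ v → α ≤ InnerProductGeometry.angle u v) →
        A.Finite ∧ (A.ncard : ℝ) ≤ C * α ^ (-((n : ℝ) - 1)) := by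
  set E := EuclideanSpace ℝ (Fin n) with hE
  rcases Nat.eq_zero_or_pos n with hn | hn
  · -- trivial case n = 0
    refine ⟨1, one_pos, fun α hα hα1 A hA0 hsep => ?_⟩
    subst hn
    have hsub : Subsingleton E := by
      refine ⟨fun a b => ?_⟩
      ext i
      exact absurd i.2 (Nat.not_lt_zero _)
    have hAe : A = ∅ := by
      ext u
      simp only [Set.mem_empty_iff_false, iff_false]
      intro hu
      exact hA0 (by rwa [hsub.elim u 0] at hu)
    subst hAe
    refine ⟨Set.finite_empty, ?_⟩
    simp only [Set.ncard_empty, Nat.cast_zero, one_mul]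
    positivity
  · -- main case n ≥ 1
    have hfr : Module.finrank ℝ E = n := finrank_euclideanSpace_fin
    haveI : Nontrivial E := Module.nontrivial_of_finrank_pos (R := ℝ) (by rw [hfr]; exact hn)
    refine ⟨(n : ℝ) * 8 ^ n, by positivity, fun α hα hα1 A hA0 hsep => ?_⟩
    set s : ℝ := α / 4 with hs_def
    have hs : 0 < s := by positivity
    have hs1 : s < 1 / 2 := by rw [hs_def]; linarith
    set f : E → E := fun u => ‖u‖⁻¹ • u with hf
    set B : Set E := f '' A with hB
    have hAnz : ∀ u ∈ A, u ≠ 0 := fun u hu h => hA0 (h ▸ hu)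
    have hnorm : ∀ x ∈ B, ‖x‖ = 1 := by
      rintro x ⟨u, hu, rfl⟩
      have hu0 : u ≠ 0 := hAnz u hu
      simp [hf, norm_smul, abs_of_nonneg (inv_nonneg.2 (norm_nonneg u)),
        inv_mul_cancel₀ (norm_ne_zero_iff.2 hu0)]
      rw [abs_of_nonneg (norm_nonneg _)]
      exact inv_mul_cancel₀ (norm_ne_zero_iff.2 hu0)
    have hangle : ∀ u ∈ A, ∀ v ∈ A, angle (f u) (f v) = angle u v := by
      intro u hu v hv
      have hu0 : (0:ℝ) < ‖u‖⁻¹ := inv_pos.2 (norm_pos_iff.2 (hAnz u hu))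
      have hv0 : (0:ℝ) < ‖v‖⁻¹ := inv_pos.2 (norm_pos_iff.2 (hAnz v hv))
      rw [hf]
      rw [angle_smul_left_of_pos _ _ hu0, angle_smul_right_of_pos _ _ hv0]
    have hinj : Set.InjOn f A := by
      intro u hu v hv huv
      by_contra hne
      have h1 : α ≤ angle u v := hsep u hu v hv hne
      have h2 : angle u v = 0 := by
        rw [← hangle u hu v hv, huv]
        exact angle_self (by
          simp only [hf, ne_eq, smul_eq_zero, inv_eq_zero, norm_eq_zero, not_or]
          exact ⟨norm_ne_zero_iff.2 (hAnz v hv), hAnz v hv⟩)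
      linarith
    -- separation on the sphere
    have hsep' : ∀ x ∈ B, ∀ y ∈ B, x ≠ y → α / 2 ≤ ‖x - y‖ := by
      rintro x ⟨u, hu, rfl⟩ y ⟨v, hv, rfl⟩ hxy
      have huv : u ≠ v := fun h => hxy (by rw [h])
      have h1 : α ≤ angle (f u) (f v) := by
        rw [hangle u hu v hv]; exact hsep u hu v hv huv
      have hx1 : ‖f u‖ = 1 := hnorm _ ⟨u, hu, rfl⟩
      have hy1 : ‖f v‖ = 1 := hnorm _ ⟨v, hv, rfl⟩
      have hcos : Real.cos (angle (f u) (f v)) = ⟪f u, f v⟫ := by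
        rw [cos_angle, hx1, hy1]; ring
      have h3 : Real.cos (angle (f u) (f v)) ≤ Real.cos α :=
        Real.cos_le_cos_of_nonneg_of_le_pi hα.le (angle_le_pi _ _) h1
      have h4 : Real.cos α ≤ 1 - 2 / π ^ 2 * α ^ 2 :=
        Real.cos_le_one_sub_mul_cos_sq (by
          rw [abs_of_pos hα]; linarith [Real.pi_gt_three])
      have h5 : ‖f u - f v‖ ^ 2 = 2 - 2 * ⟪f u, f v⟫ := by
        rw [norm_sub_sq_real, hx1, hy1]; ring
      have hpi : π ≤ 4 := Real.pi_le_four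
      have hpi0 : 0 < π := Real.pi_pos
      have hsq : (α / 2) ^ 2 ≤ ‖f u - f v‖ ^ 2 := by
        rw [h5, hcos] at *
        have hq : 2 / π ^ 2 ≥ 1 / 8 := by
          rw [ge_iff_le, div_le_div_iff₀ (by norm_num) (by positivity)]
          nlinarith
        nlinarith [sq_nonneg α]
      nlinarith [norm_nonneg (f u - f v), hα.le]
    -- measure-theoretic packing
    have hballvol : ∀ x : E, volume (ball x s) = ENNReal.ofReal (s ^ n) * volume (ball (0:E) 1) :=
      fun x => by rw [Measure.addHaar_ball volume x hs.le, hfr]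
    have hdisj : (B.Pairwise fun x y => Disjoint (ball x s) (ball y s)) := by
      intro x hx y hy hxy
      apply ball_disjoint_ball
      rw [dist_eq_norm]
      have := hsep' x hx y hy hxy
      linarith [hsep' x hx y hy hxy]
    have hsubset : ∀ x ∈ B, ball x s ⊆ closedBall (0:E) (1 + s) \ ball (0:E) (1 - s) := by
      intro x hx y hy
      have h1 : ‖x‖ = 1 := hnorm x hx
      have h2 : dist y x < s := mem_ball.1 hy
      constructor
      · rw [mem_closedBall, dist_zero_right]
        calc ‖y‖ = ‖x + (y - x)‖ := by congr 1; abel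
          _ ≤ ‖x‖ + ‖y - x‖ := norm_add_le _ _
          _ ≤ 1 + s := by rw [h1]; rw [dist_eq_norm] at h2; linarith
      · simp only [mem_ball, dist_zero_right, not_lt]
        have : ‖x‖ ≤ ‖y‖ + ‖x - y‖ := by
          calc ‖x‖ = ‖y + (x - y)‖ := by congr 1; abel
            _ ≤ ‖y‖ + ‖x - y‖ := norm_add_le _ _
        rw [dist_eq_norm, ← norm_neg (y - x), neg_sub] at h2
        rw [h1] at this
        linarith
    have hμ1pos : (0:ℝ≥0∞) < volume (ball (0:E) 1) := measure_ball_pos volume _ one_pos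
    have hμ1top : volume (ball (0:E) 1) ≠ ⊤ := measure_ball_lt_top.ne
    -- finiteness of B
    have hBfin : B.Finite := by
      rw [← Set.finite_coe_iff]
      have hfin := MeasureTheory.Measure.finite_const_le_meas_of_disjoint_iUnion
        (volume : Measure E) (ε := ENNReal.ofReal (s ^ n) * volume (ball (0:E) 1))
        (by exact ENNReal.mul_pos (ENNReal.ofReal_pos.2 (by positivity)).ne' hμ1pos.ne')
        (As := fun x : B => ball (x : E) s) (fun x => measurableSet_ball)
        (fun x y hxy => hdisj x.2 y.2 (Subtype.coe_injective.ne hxy))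
        (by
          refine ne_top_of_le_ne_top (measure_closedBall_lt_top (x := (0:E)) (r := 1 + s)).ne
            (measure_mono ?_)
          refine Set.iUnion_subset fun x => (hsubset x x.2).trans Set.diff_subset)
      have : {i : B | ENNReal.ofReal (s ^ n) * volume (ball (0:E) 1)
          ≤ volume (ball (i : E) s)} = Set.univ := by
        ext x; simp [hballvol]
      rw [this] at hfin
      exact Set.finite_univ_iff.1 hfin
    have hAfin : A.Finite := Set.Finite.of_finite_image hBfin hinj
    refine ⟨hAfin, ?_⟩
    -- counting
    set t : Finset E := hBfin.toFinset with ht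
    set k : ℕ := A.ncard with hk
    have hkt : t.card = k := by
      rw [ht, ← Set.ncard_eq_toFinset_card B hBfin, hB, Set.ncard_image_of_injOn hinj]
    have hUmeas : volume (⋃ x ∈ t, ball x s) = (k : ℝ≥0∞) * (ENNReal.ofReal (s ^ n)
        * volume (ball (0:E) 1)) := by
      rw [measure_biUnion_finset (fun x hx y hy hxy =>
          hdisj (hBfin.mem_toFinset.1 hx) (hBfin.mem_toFinset.1 hy) hxy)
        (fun x _ => measurableSet_ball)]
      rw [Finset.sum_congr rfl (fun x _ => hballvol x), Finset.sum_const, hkt, nsmul_eq_mul]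
    have hUsub : (⋃ x ∈ t, ball x s) ⊆ closedBall (0:E) (1 + s) \ ball (0:E) (1 - s) :=
      Set.iUnion₂_subset fun x hx => hsubset x (hBfin.mem_toFinset.1 hx)
    have hdisj2 : Disjoint (⋃ x ∈ t, ball x s) (ball (0:E) (1 - s)) :=
      Set.disjoint_left.2 fun y hy hy2 => ((hUsub hy).2 hy2)
    have hunion : volume ((⋃ x ∈ t, ball x s) ∪ ball (0:E) (1 - s))
        ≤ volume (closedBall (0:E) (1 + s)) :=
      measure_mono (Set.union_subset (fun y hy => (hUsub hy).1)
        (ball_subset_closedBall.trans (closedBall_subset_closedBall (by linarith))))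
    rw [measure_union hdisj2 measurableSet_ball, hUmeas] at hunion
    have hcb : volume (closedBall (0:E) (1 + s)) = ENNReal.ofReal ((1+s) ^ n)
        * volume (ball (0:E) 1) := by
      rw [Measure.addHaar_closedBall volume _ (by linarith : (0:ℝ) ≤ 1 + s), hfr]
    have hib : volume (ball (0:E) (1 - s)) = ENNReal.ofReal ((1-s) ^ n)
        * volume (ball (0:E) 1) := by
      rw [Measure.addHaar_ball volume _ (by linarith : (0:ℝ) ≤ 1 - s), hfr]
    rw [hcb, hib] at hunion
    have hennreal : (k : ℝ≥0∞) * ENNReal.ofReal (s ^ n) + ENNReal.ofReal ((1-s) ^ n)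
        ≤ ENNReal.ofReal ((1+s) ^ n) := by
      rw [← ENNReal.mul_le_mul_iff_left hμ1pos.ne' hμ1top, add_mul, mul_assoc]
      exact hunion
    have hreal : (k : ℝ) * s ^ n + (1 - s) ^ n ≤ (1 + s) ^ n := by
      have hk0 : (0:ℝ) ≤ (k:ℝ) := Nat.cast_nonneg k
      have hsn0 : (0:ℝ) ≤ s ^ n := pow_nonneg hs.le n
      have h1s0 : (0:ℝ) ≤ (1 - s) ^ n := pow_nonneg (by linarith) n
      have h1s1 : (0:ℝ) ≤ (1 + s) ^ n := pow_nonneg (by linarith) n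
      rw [← ENNReal.ofReal_natCast k, ← ENNReal.ofReal_mul hk0,
        ← ENNReal.ofReal_add (mul_nonneg hk0 hsn0) h1s0] at hennreal
      exact (ENNReal.ofReal_le_ofReal_iff h1s1).1 hennreal
    have hpow : (1 + s) ^ n - (1 - s) ^ n ≤ (n : ℝ) * 2 ^ n * ((1 + s) - (1 - s)) :=
      aux_pow_sub_pow_le n (by linarith) (by linarith) (by linarith)
    have hkey : (k : ℝ) * s ^ n ≤ 2 * (n : ℝ) * 2 ^ n * s := by
      have h2s : (1 + s) - (1 - s) = 2 * s := by ring
      rw [h2s] at hpow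
      nlinarith
    have hsn : s ^ n = s ^ (n - 1) * s := by
      rw [← pow_succ, Nat.sub_add_cancel hn]
    have hks : (k : ℝ) * s ^ (n - 1) ≤ 2 * (n : ℝ) * 2 ^ n := by
      have h := hkey
      rw [hsn, ← mul_assoc] at h
      exact le_of_mul_le_mul_right h hs
    have hα4 : α ^ (n - 1) = 4 ^ (n - 1) * s ^ (n - 1) := by
      rw [← mul_pow]; congr 1; rw [hs_def]; ring
    have hkα : (k : ℝ) * α ^ (n - 1) ≤ (n : ℝ) * 8 ^ n := by
      have h1 : (k : ℝ) * α ^ (n - 1) = ((k : ℝ) * s ^ (n - 1)) * 4 ^ (n - 1) := by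
        rw [hα4]; ring
      have h2 : ((k : ℝ) * s ^ (n - 1)) * 4 ^ (n - 1) ≤ (2 * (n : ℝ) * 2 ^ n) * 4 ^ (n - 1) := by
        apply mul_le_mul_of_nonneg_right hks (by positivity)
      have h8 : (8:ℝ) ^ n = 2 ^ n * 4 ^ n := by rw [← mul_pow]; norm_num
      have h4 : (4:ℝ) ^ n = 4 ^ (n - 1) * 4 := by rw [← pow_succ, Nat.sub_add_cancel hn]
      have h3 : (2 * (n : ℝ) * 2 ^ n) * 4 ^ (n - 1) ≤ (n : ℝ) * 8 ^ n := by
        rw [h8, h4]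
        have hX : (0:ℝ) ≤ (n:ℝ) * (2 ^ n * 4 ^ (n-1)) := by positivity
        nlinarith [hX]
      linarith [h1 ▸ h2.trans h3]
    -- convert to rpow
    have hcast : -((n : ℝ) - 1) = -(((n - 1 : ℕ) : ℝ)) := by
      rw [Nat.cast_sub hn]; push_cast; ring
    have hαp : (0:ℝ) < α ^ (n - 1) := pow_pos hα _
    rw [hcast, Real.rpow_neg hα.le, Real.rpow_natCast, ← div_eq_mul_inv, le_div_iff₀ hαp]
    exact hkα
end

section
/- Let K ⊆ ℝ be a number field with Galois closure K̄ ⊆ ℂ, and let A ≥ 2, α ≥ 1. Call an element of K 'α-well-balanced' if it equals a/b with a, b ∈ O_K such that either a = 0 and b = 1, or A^{-α} ≤ |σ(a)|, |σ(b)| ≤ A^α for every embedding σ : K̄ → ℂ extending over Gal(K̄/ℚ). If x and y are both α-well-balanced, then x + y is β-well-balanced with β = (2α+1)·[K̄:ℚ]. -/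
open scoped BigOperators

lemma integral_coe_iff {Kbar : IntermediateField ℚ ℂ} (t : Kbar) :
    IsIntegral ℤ (t : ℂ) ↔ IsIntegral ℤ t :=
  isIntegral_algHom_iff (Kbar.val.restrictScalars ℤ) Subtype.val_injective

lemma prod_abs_ge_one (Kbar : IntermediateField ℚ ℂ) [Normal ℚ Kbar]
    [FiniteDimensional ℚ Kbar]
    (t : Kbar) (ht : IsIntegral ℤ (t : ℂ)) (htne : t ≠ 0) :
    1 ≤ ∏ σ : Kbar ≃ₐ[ℚ] Kbar, ‖((σ t : Kbar) : ℂ)‖ := by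
  haveI : IsGalois ℚ Kbar := ⟨⟩
  have ht' : IsIntegral ℤ t := (integral_coe_iff t).mp ht
  have hnorm : algebraMap ℚ Kbar (Algebra.norm ℚ t) = ∏ σ : Kbar ≃ₐ[ℚ] Kbar, σ t :=
    Algebra.norm_eq_prod_automorphisms ℚ t
  have hint : IsIntegral ℤ (∏ σ : Kbar ≃ₐ[ℚ] Kbar, σ t) := by
    apply IsIntegral.prod
    intro σ _
    exact ht'.map ((σ : Kbar →ₐ[ℚ] Kbar).restrictScalars ℤ)
  rw [← hnorm] at hint
  have hint' : IsIntegral ℤ (Algebra.norm ℚ t) := by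
    have := isIntegral_algHom_iff ((Algebra.ofId ℚ Kbar).restrictScalars ℤ)
      (algebraMap ℚ Kbar).injective (x := Algebra.norm ℚ t)
    exact this.mp hint
  obtain ⟨m, hm⟩ := IsIntegrallyClosed.isIntegral_iff.mp hint'
  have hne : Algebra.norm ℚ t ≠ 0 := by
    rw [Algebra.norm_ne_zero_iff]
    exact htne
  have hm1 : 1 ≤ |(m : ℚ)| := by
    rw [← hm] at hne
    have : m ≠ 0 := by rintro rfl; simp at hne
    exact_mod_cast Int.one_le_abs (by exact_mod_cast this)
  calc (1 : ℝ) ≤ |(m : ℚ)| := by exact_mod_cast hm1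
    _ = ‖(algebraMap ℚ ℂ) (m : ℚ)‖ := by
        rw [show (algebraMap ℚ ℂ) (m : ℚ) = ((m : ℤ) : ℂ) by rw [eq_ratCast]; norm_cast,
          Complex.norm_intCast]
        push_cast; ring
    _ = ‖((∏ σ : Kbar ≃ₐ[ℚ] Kbar, σ t : Kbar) : ℂ)‖ := by
        congr 1
        rw [← hnorm, ← hm]
        rfl
    _ = ∏ σ : Kbar ≃ₐ[ℚ] Kbar, ‖((σ t : Kbar) : ℂ)‖ := by
        push_cast
        exact norm_prod _ _

lemma abs_conj_lower (Kbar : IntermediateField ℚ ℂ) [Normal ℚ Kbar]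
    [FiniteDimensional ℚ Kbar]
    (t : Kbar) (ht : IsIntegral ℤ (t : ℂ)) (htne : t ≠ 0) (M : ℝ) (hM : 1 ≤ M)
    (hbd : ∀ σ : Kbar ≃ₐ[ℚ] Kbar, ‖((σ t : Kbar) : ℂ)‖ ≤ M)
    (σ₀ : Kbar ≃ₐ[ℚ] Kbar) :
    M ^ (-(Module.finrank ℚ Kbar : ℝ)) ≤ ‖((σ₀ t : Kbar) : ℂ)‖ := by
  classical
  haveI : IsGalois ℚ Kbar := ⟨⟩
  have hM0 : (0 : ℝ) < M := lt_of_lt_of_le one_pos hM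
  set n : ℕ := Module.finrank ℚ Kbar with hn
  have hcard : Fintype.card (Kbar ≃ₐ[ℚ] Kbar) = n := by
    rw [← Nat.card_eq_fintype_card]; exact IsGalois.card_aut_eq_finrank ℚ Kbar
  have h1 : 1 ≤ ∏ σ : Kbar ≃ₐ[ℚ] Kbar, ‖((σ t : Kbar) : ℂ)‖ :=
    prod_abs_ge_one Kbar t ht htne
  have hsplit : ∏ σ : Kbar ≃ₐ[ℚ] Kbar, ‖((σ t : Kbar) : ℂ)‖
      = ‖((σ₀ t : Kbar) : ℂ)‖ *
        ∏ σ ∈ Finset.univ.erase σ₀, ‖((σ t : Kbar) : ℂ)‖ :=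
    (Finset.mul_prod_erase Finset.univ _ (Finset.mem_univ σ₀)).symm
  have hrest : ∏ σ ∈ Finset.univ.erase σ₀, ‖((σ t : Kbar) : ℂ)‖
      ≤ M ^ ((Finset.univ.erase σ₀).card) :=
    by
      rw [← Finset.prod_const]
      exact Finset.prod_le_prod (fun σ _ => norm_nonneg _) (fun σ _ => hbd σ)
  have hcard' : (Finset.univ.erase σ₀).card ≤ n := by
    calc (Finset.univ.erase σ₀).card ≤ Finset.univ.card := Finset.card_erase_le
      _ = n := by rw [Finset.card_univ, hcard]
  have hMn : M ^ ((Finset.univ.erase σ₀).card) ≤ M ^ n := pow_le_pow_right₀ hM hcard'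
  have habs0 : 0 < ‖((σ₀ t : Kbar) : ℂ)‖ := by
    have : ((σ₀ t : Kbar) : ℂ) ≠ 0 := by
      simp only [ne_eq, ZeroMemClass.coe_eq_zero, map_eq_zero_iff σ₀ σ₀.injective]
      exact htne
    exact norm_pos_iff.mpr this
  have hkey : 1 ≤ ‖((σ₀ t : Kbar) : ℂ)‖ * M ^ (n : ℝ) := by
    rw [Real.rpow_natCast]
    calc (1 : ℝ) ≤ _ := h1
      _ = _ := hsplit
      _ ≤ ‖((σ₀ t : Kbar) : ℂ)‖ * M ^ n := by
          apply mul_le_mul_of_nonneg_left (hrest.trans hMn) habs0.le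
  have hMe : M ^ (-(n : ℝ)) * M ^ (n : ℝ) = 1 := by
    rw [← Real.rpow_add hM0]; simp
  have hMpos : (0 : ℝ) < M ^ (-(n : ℝ)) := Real.rpow_pos_of_pos hM0 _
  have hMpos' : (0 : ℝ) < M ^ ((n : ℝ)) := Real.rpow_pos_of_pos hM0 _
  nlinarith [mul_le_mul_of_nonneg_left hkey hMpos.le]

/-- An element `x` of `ℂ` (thought of as lying in the number field `K ⊆ K̄`) is
`α`-well-balanced (with respect to the Galois closure `K̄` and the parameter `A`)
if `x = a/b` with `a, b` algebraic integers of `K̄` such that either `a = 0` and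
`b = 1`, or `A^{-α} ≤ |σ(a)|, |σ(b)| ≤ A^α` for every `σ ∈ Gal(K̄/ℚ)`. -/
def WellBalanced (Kbar : IntermediateField ℚ ℂ) (A α : ℝ) (x : ℂ) : Prop :=
  ∃ a b : Kbar, IsIntegral ℤ (a : ℂ) ∧ IsIntegral ℤ (b : ℂ) ∧ x = (a : ℂ) / (b : ℂ) ∧
    ((a = 0 ∧ b = 1) ∨ ∀ σ : Kbar ≃ₐ[ℚ] Kbar,
      (A ^ (-α) ≤ ‖((σ a : Kbar) : ℂ)‖ ∧ ‖((σ a : Kbar) : ℂ)‖ ≤ A ^ α) ∧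
      (A ^ (-α) ≤ ‖((σ b : Kbar) : ℂ)‖ ∧ ‖((σ b : Kbar) : ℂ)‖ ≤ A ^ α))


lemma WellBalanced_mono {Kbar : IntermediateField ℚ ℂ} {A α β : ℝ} {x : ℂ}
    (hA : 1 ≤ A) (hαβ : α ≤ β) (h : WellBalanced Kbar A α x) : WellBalanced Kbar A β x := by
  obtain ⟨a, b, ha, hb, hx, hab⟩ := h
  refine ⟨a, b, ha, hb, hx, ?_⟩
  rcases hab with h | h
  · exact Or.inl h
  · refine Or.inr fun σ => ?_
    obtain ⟨⟨h1, h2⟩, h3, h4⟩ := h σ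
    have hneg : A ^ (-β) ≤ A ^ (-α) :=
      Real.rpow_le_rpow_of_exponent_le hA (by linarith)
    have hpos : A ^ α ≤ A ^ β := Real.rpow_le_rpow_of_exponent_le hA hαβ
    exact ⟨⟨hneg.trans h1, h2.trans hpos⟩, hneg.trans h3, h4.trans hpos⟩

theorem stmt_3 (Kbar K : IntermediateField ℚ ℂ)
    [Normal ℚ Kbar] [FiniteDimensional ℚ Kbar]
    (hK : K ≤ Kbar) (hreal : ∀ z ∈ K, (z : ℂ).im = 0)
    (A α : ℝ) (hA : 2 ≤ A) (hα : 1 ≤ α)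
    (x y : ℂ) (hx : x ∈ K) (hy : y ∈ K)
    (hwx : WellBalanced Kbar A α x) (hwy : WellBalanced Kbar A α y) :
    WellBalanced Kbar A ((2 * α + 1) * (Module.finrank ℚ Kbar : ℝ)) (x + y) := by
  classical
  have hA1 : (1 : ℝ) ≤ A := by linarith
  have hA0 : (0 : ℝ) < A := by linarith
  set n : ℕ := Module.finrank ℚ Kbar with hn
  have hn1 : 1 ≤ n := Module.finrank_pos
  have hn1' : (1 : ℝ) ≤ (n : ℝ) := by exact_mod_cast hn1
  set β : ℝ := (2 * α + 1) * (n : ℝ) with hβ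
  have hαβ : α ≤ β := by nlinarith
  have h2αβ : 2 * α ≤ β := by nlinarith
  have h2α1β : 2 * α + 1 ≤ β := by nlinarith
  obtain ⟨a, b, ha, hb, hxe, hab⟩ := hwx
  obtain ⟨c, d, hc, hd, hye, hcd⟩ := hwy
  rcases hab with ⟨rfl, rfl⟩ | hab
  · have hx0 : x = 0 := by simpa using hxe
    rw [hx0, zero_add]
    exact WellBalanced_mono hA1 hαβ ⟨c, d, hc, hd, hye, hcd⟩
  rcases hcd with ⟨rfl, rfl⟩ | hcd
  · have hy0 : y = 0 := by simpa using hye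
    rw [hy0, add_zero]
    exact WellBalanced_mono hA1 hαβ ⟨a, b, ha, hb, hxe, Or.inr hab⟩
  -- main case
  have hpow_pos : (0 : ℝ) < A ^ (-α) := Real.rpow_pos_of_pos hA0 _
  have hb0 : (b : ℂ) ≠ 0 := by
    have h := (hab AlgEquiv.refl).2.1
    change A ^ (-α) ≤ ‖((b : Kbar) : ℂ)‖ at h
    intro hcon
    rw [hcon] at h
    simp at h
    linarith
  have hd0 : (d : ℂ) ≠ 0 := by
    have h := (hcd AlgEquiv.refl).2.1
    change A ^ (-α) ≤ ‖((d : Kbar) : ℂ)‖ at h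
    intro hcon
    rw [hcon] at h
    simp at h
    linarith
  set N : Kbar := a * d + b * c with hN
  set D : Kbar := b * d with hD
  have hxy : x + y = (N : ℂ) / (D : ℂ) := by
    rw [hxe, hye, hN, hD]
    push_cast
    field_simp
  have hNint : IsIntegral ℤ (N : ℂ) := by
    have : ((N : Kbar) : ℂ) = (a : ℂ) * (d : ℂ) + (b : ℂ) * (c : ℂ) := rfl
    rw [this]
    exact (ha.mul hd).add (hb.mul hc)
  have hDint : IsIntegral ℤ (D : ℂ) := by
    have : ((D : Kbar) : ℂ) = (b : ℂ) * (d : ℂ) := rfl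
    rw [this]
    exact hb.mul hd
  by_cases hN0 : N = 0
  · refine ⟨0, 1, isIntegral_zero, isIntegral_one, ?_, Or.inl ⟨rfl, rfl⟩⟩
    rw [hxy, hN0]
    simp
  -- N ≠ 0 case
  -- basic rpow facts
  have hAαα : A ^ α * A ^ α = A ^ (2 * α) := by
    rw [← Real.rpow_add hA0]; ring_nf
  have hAnegαα : A ^ (-α) * A ^ (-α) = A ^ (-(2 * α)) := by
    rw [← Real.rpow_add hA0]; ring_nf
  have hupN : ∀ σ : Kbar ≃ₐ[ℚ] Kbar, ‖((σ N : Kbar) : ℂ)‖ ≤ A ^ (2 * α + 1) := by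
    intro σ
    obtain ⟨⟨ha1, ha2⟩, hb1, hb2⟩ := hab σ
    obtain ⟨⟨hc1, hc2⟩, hd1, hd2⟩ := hcd σ
    have hcoe : ((σ N : Kbar) : ℂ)
        = ((σ a : Kbar) : ℂ) * ((σ d : Kbar) : ℂ) + ((σ b : Kbar) : ℂ) * ((σ c : Kbar) : ℂ) := by
      rw [hN, map_add, map_mul, map_mul]; push_cast; ring
    have h2A : 2 * A ^ (2 * α) ≤ A ^ (2 * α + 1) := by
      have : A ^ (2 * α) * A ^ (1 : ℝ) = A ^ (2 * α + 1) := by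
        rw [← Real.rpow_add hA0]
      rw [← this, Real.rpow_one]
      have hpos : (0 : ℝ) < A ^ (2 * α) := Real.rpow_pos_of_pos hA0 _
      nlinarith
    calc ‖((σ N : Kbar) : ℂ)‖
        ≤ ‖((σ a : Kbar) : ℂ) * ((σ d : Kbar) : ℂ)‖
          + ‖((σ b : Kbar) : ℂ) * ((σ c : Kbar) : ℂ)‖ := by
            rw [hcoe]; exact norm_add_le _ _
      _ ≤ A ^ α * A ^ α + A ^ α * A ^ α := by
            rw [norm_mul, norm_mul]
            gcongr <;> exact norm_nonneg _
      _ = 2 * A ^ (2 * α) := by rw [hAαα]; ring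
      _ ≤ A ^ (2 * α + 1) := h2A
  have hM1 : (1 : ℝ) ≤ A ^ (2 * α + 1) := by
    have := Real.rpow_le_rpow_of_exponent_le hA1 (show (0 : ℝ) ≤ 2 * α + 1 by linarith)
    simpa using this
  have hlowN : ∀ σ : Kbar ≃ₐ[ℚ] Kbar, A ^ (-β) ≤ ‖((σ N : Kbar) : ℂ)‖ := by
    intro σ
    have h := abs_conj_lower Kbar N hNint hN0 (A ^ (2 * α + 1)) hM1 hupN σ
    have heq : (A ^ (2 * α + 1)) ^ (-(n : ℝ)) = A ^ (-β) := by
      rw [← Real.rpow_mul hA0.le]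
      congr 1
      rw [hβ]; ring
    rwa [heq] at h
  refine ⟨N, D, hNint, hDint, hxy, Or.inr fun σ => ?_⟩
  obtain ⟨⟨ha1, ha2⟩, hb1, hb2⟩ := hab σ
  obtain ⟨⟨hc1, hc2⟩, hd1, hd2⟩ := hcd σ
  have hDcoe : ((σ D : Kbar) : ℂ) = ((σ b : Kbar) : ℂ) * ((σ d : Kbar) : ℂ) := by
    rw [hD, map_mul]; push_cast; ring
  have hDabs : ‖((σ D : Kbar) : ℂ)‖
      = ‖((σ b : Kbar) : ℂ)‖ * ‖((σ d : Kbar) : ℂ)‖ := by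
    rw [hDcoe, norm_mul]
  constructor
  · constructor
    · exact hlowN σ
    · calc ‖((σ N : Kbar) : ℂ)‖ ≤ A ^ (2 * α + 1) := hupN σ
        _ ≤ A ^ β := Real.rpow_le_rpow_of_exponent_le hA1 h2α1β
  · constructor
    · calc A ^ (-β) ≤ A ^ (-(2 * α)) :=
            Real.rpow_le_rpow_of_exponent_le hA1 (by linarith)
        _ = A ^ (-α) * A ^ (-α) := hAnegαα.symm
        _ ≤ ‖((σ b : Kbar) : ℂ)‖ * ‖((σ d : Kbar) : ℂ)‖ := by
            gcongr
        _ = ‖((σ D : Kbar) : ℂ)‖ := hDabs.symm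
    · calc ‖((σ D : Kbar) : ℂ)‖
          = ‖((σ b : Kbar) : ℂ)‖ * ‖((σ d : Kbar) : ℂ)‖ := hDabs
        _ ≤ A ^ α * A ^ α := by
            gcongr <;> exact norm_nonneg _
        _ = A ^ (2 * α) := hAαα
        _ ≤ A ^ β := Real.rpow_le_rpow_of_exponent_le hA1 h2αβ
end

section
/- Let x, y ∈ ℝⁿ be vectors lying on the boundary of the unit cube [−1,1]ⁿ (i.e., with sup-norm equal to 1). If x and y lie in the same face of the cube and ‖x − y‖_∞ < δ, then the Euclidean angle between x and y is less than C·δ for a constant C depending only on n. -/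
open Real

set_option maxHeartbeats 1000000 in
theorem stmt_19 (n : ℕ) :
    ∃ C : ℝ, 0 < C ∧ ∀ (x y : Fin n → ℝ) (δ : ℝ), 0 < δ →
      (∀ i, |x i| ≤ 1) → (∃ i, |x i| = 1) →
      (∀ i, |y i| ≤ 1) → (∃ i, |y i| = 1) →
      (∃ i₀, (x i₀ = 1 ∧ y i₀ = 1) ∨ (x i₀ = -1 ∧ y i₀ = -1)) →
      (∀ i, |x i - y i| < δ) →
      Real.arccos ((∑ i, x i * y i) /
          (Real.sqrt (∑ i, x i ^ 2) * Real.sqrt (∑ i, y i ^ 2))) < C * δ := by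
  refine ⟨Real.pi * (Real.sqrt n + 1), by positivity, ?_⟩
  intro x y δ hδ hx1 hxe hy1 hye hface hclose
  obtain ⟨i₀, hi₀⟩ := hface
  -- pass to EuclideanSpace
  set X : EuclideanSpace ℝ (Fin n) := (WithLp.equiv 2 _).symm x with hX
  set Y : EuclideanSpace ℝ (Fin n) := (WithLp.equiv 2 _).symm y with hY
  have hXapp : ∀ i, X i = x i := fun i => rfl
  have hYapp : ∀ i, Y i = y i := fun i => rfl
  have hinner : (inner ℝ X Y : ℝ) = ∑ i, x i * y i := by
    simp [PiLp.inner_apply, RCLike.inner_apply, hXapp, hYapp, mul_comm]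
  have hnX : ‖X‖ = Real.sqrt (∑ i, x i ^ 2) := by
    rw [EuclideanSpace.norm_eq]
    congr 1; refine Finset.sum_congr rfl fun i _ => ?_
    rw [hXapp, Real.norm_eq_abs, sq_abs]
  have hnY : ‖Y‖ = Real.sqrt (∑ i, y i ^ 2) := by
    rw [EuclideanSpace.norm_eq]
    congr 1; refine Finset.sum_congr rfl fun i _ => ?_
    rw [hYapp, Real.norm_eq_abs, sq_abs]
  rw [← hinner, ← hnX, ← hnY]
  -- basic norm bounds
  have hx₀sq : x i₀ ^ 2 = 1 := by rcases hi₀ with ⟨h, _⟩ | ⟨h, _⟩ <;> rw [h] <;> ring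
  have hy₀sq : y i₀ ^ 2 = 1 := by rcases hi₀ with ⟨_, h⟩ | ⟨_, h⟩ <;> rw [h] <;> ring
  have hXge : (1 : ℝ) ≤ ‖X‖ := by
    rw [hnX]
    have : (1 : ℝ) ≤ ∑ i, x i ^ 2 := by
      rw [← hx₀sq]
      exact Finset.single_le_sum (fun i _ => sq_nonneg (x i)) (Finset.mem_univ i₀)
    calc (1:ℝ) = Real.sqrt 1 := (Real.sqrt_one).symm
    _ ≤ _ := Real.sqrt_le_sqrt this
  have hYge : (1 : ℝ) ≤ ‖Y‖ := by
    rw [hnY]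
    have : (1 : ℝ) ≤ ∑ i, y i ^ 2 := by
      rw [← hy₀sq]
      exact Finset.single_le_sum (fun i _ => sq_nonneg (y i)) (Finset.mem_univ i₀)
    calc (1:ℝ) = Real.sqrt 1 := (Real.sqrt_one).symm
    _ ≤ _ := Real.sqrt_le_sqrt this
  have hXpos : (0:ℝ) < ‖X‖ := lt_of_lt_of_le one_pos hXge
  have hYpos : (0:ℝ) < ‖Y‖ := lt_of_lt_of_le one_pos hYge
  -- distance bound
  have hd : ‖X - Y‖ < Real.sqrt n * δ := by
    have hsub : ‖X - Y‖ = Real.sqrt (∑ i, (x i - y i) ^ 2) := by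
      rw [EuclideanSpace.norm_eq]
      congr 1; refine Finset.sum_congr rfl fun i _ => ?_
      have : (X - Y) i = x i - y i := rfl
      rw [this, Real.norm_eq_abs, sq_abs]
    rw [hsub]
    have hsum : (∑ i, (x i - y i) ^ 2) < ∑ _i : Fin n, δ ^ 2 := by
      refine Finset.sum_lt_sum_of_nonempty ⟨i₀, Finset.mem_univ i₀⟩ fun i _ => ?_
      calc (x i - y i) ^ 2 = |x i - y i| ^ 2 := (sq_abs _).symm
      _ < δ ^ 2 := by
          have := hclose i
          nlinarith [abs_nonneg (x i - y i)]
    have : (∑ _i : Fin n, δ ^ 2) = n * δ ^ 2 := by simp [mul_comm]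
    rw [this] at hsum
    have h1 : Real.sqrt (∑ i, (x i - y i) ^ 2) < Real.sqrt (n * δ ^ 2) :=
      Real.sqrt_lt_sqrt (Finset.sum_nonneg fun i _ => sq_nonneg _) hsum
    have h2 : Real.sqrt ((n : ℝ) * δ ^ 2) = Real.sqrt n * δ := by
      rw [Real.sqrt_mul (Nat.cast_nonneg n), Real.sqrt_sq hδ.le]
    rw [h2] at h1
    exact h1
  clear_value X Y
  -- unit vectors
  set u : EuclideanSpace ℝ (Fin n) := ‖X‖⁻¹ • X with hu
  set v : EuclideanSpace ℝ (Fin n) := ‖Y‖⁻¹ • Y with hv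
  have hnu : ‖u‖ = 1 := norm_smul_inv_norm (by intro h; rw [h, norm_zero] at hXpos; exact lt_irrefl 0 hXpos)
  have hnv : ‖v‖ = 1 := norm_smul_inv_norm (by intro h; rw [h, norm_zero] at hYpos; exact lt_irrefl 0 hYpos)
  set t : ℝ := inner ℝ u v with ht
  have htval : t = (inner ℝ X Y : ℝ) / (‖X‖ * ‖Y‖) := by
    rw [ht, hu, hv, real_inner_smul_left, real_inner_smul_right]
    field_simp
  rw [← htval]
  -- t is in [-1, 1]
  have htabs : |t| ≤ 1 := by
    have := abs_real_inner_le_norm u v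
    rwa [hnu, hnv, mul_one] at this
  have ht1 : t ≤ 1 := (abs_le.mp htabs).2
  have htm1 : (-1:ℝ) ≤ t := (abs_le.mp htabs).1
  -- 1 - t = ‖u - v‖^2 / 2
  have huv : ‖u - v‖ ^ 2 = 2 - 2 * t := by
    rw [norm_sub_sq_real, hnu, hnv, ← ht]; ring
  -- ‖u - v‖ ≤ 2 ‖X - Y‖
  have hdiff : ‖u - v‖ ≤ 2 * ‖X - Y‖ := by
    have hsplit : u - v = ‖X‖⁻¹ • (X - Y) + (‖X‖⁻¹ - ‖Y‖⁻¹) • Y := by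
      rw [hu, hv, smul_sub, sub_smul]; abel
    rw [hsplit]
    have h1 : ‖‖X‖⁻¹ • (X - Y)‖ ≤ ‖X - Y‖ := by
      rw [norm_smul, Real.norm_eq_abs, abs_inv, abs_norm]
      calc ‖X‖⁻¹ * ‖X - Y‖ ≤ 1 * ‖X - Y‖ := by
            apply mul_le_mul_of_nonneg_right _ (norm_nonneg _)
            rw [inv_le_one_iff₀]; right; exact hXge
      _ = ‖X - Y‖ := one_mul _
    have h2 : ‖(‖X‖⁻¹ - ‖Y‖⁻¹) • Y‖ ≤ ‖X - Y‖ := by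
      rw [norm_smul, Real.norm_eq_abs]
      have heq : ‖X‖⁻¹ - ‖Y‖⁻¹ = (‖Y‖ - ‖X‖) / (‖X‖ * ‖Y‖) := by
        field_simp
      rw [heq, abs_div, abs_of_pos (mul_pos hXpos hYpos), div_mul_eq_mul_div]
      have hnum : |‖Y‖ - ‖X‖| ≤ ‖X - Y‖ := by
        rw [abs_sub_comm]
        exact abs_norm_sub_norm_le X Y
      calc |‖Y‖ - ‖X‖| * ‖Y‖ / (‖X‖ * ‖Y‖) ≤ ‖X - Y‖ * ‖Y‖ / (‖X‖ * ‖Y‖) := by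
            gcongr
      _ = ‖X - Y‖ / ‖X‖ := by
            rw [mul_comm ‖X‖ ‖Y‖, ← div_div, mul_div_assoc, div_self (ne_of_gt hYpos),
              mul_one]
      _ ≤ ‖X - Y‖ := div_le_self (norm_nonneg _) hXge
    calc ‖‖X‖⁻¹ • (X - Y) + (‖X‖⁻¹ - ‖Y‖⁻¹) • Y‖
        ≤ ‖‖X‖⁻¹ • (X - Y)‖ + ‖(‖X‖⁻¹ - ‖Y‖⁻¹) • Y‖ := norm_add_le _ _
    _ ≤ ‖X - Y‖ + ‖X - Y‖ := add_le_add h1 h2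
    _ = 2 * ‖X - Y‖ := by ring
  clear_value u v t
  -- arccos bound: arccos t ≤ π * ‖X - Y‖
  set θ : ℝ := Real.arccos t with hθ
  have hθ0 : 0 ≤ θ := Real.arccos_nonneg t
  have hθπ : θ ≤ Real.pi := Real.arccos_le_pi t
  have hcos : Real.cos θ = t := Real.cos_arccos htm1 ht1
  have hjordan : Real.cos θ ≤ 1 - 2 / Real.pi ^ 2 * θ ^ 2 :=
    Real.cos_le_one_sub_mul_cos_sq (by rw [abs_of_nonneg hθ0]; exact hθπ)
  -- θ^2 ≤ π^2 (1 - t) / 2 ≤ π^2 ‖X-Y‖^2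
  have hθsq : θ ^ 2 ≤ Real.pi ^ 2 * ((1 - t) / 2) := by
    rw [hcos] at hjordan
    have hπ2 : (0:ℝ) < Real.pi ^ 2 := by positivity
    have h5 : 2 / Real.pi ^ 2 * θ ^ 2 ≤ 1 - t := by linarith
    rw [div_mul_eq_mul_div, div_le_iff₀ hπ2] at h5
    nlinarith [h5]
  have h1t : (1 - t) / 2 ≤ ‖X - Y‖ ^ 2 := by
    have h4 : ‖u - v‖ ^ 2 ≤ (2 * ‖X - Y‖) ^ 2 := by
      exact pow_le_pow_left₀ (norm_nonneg _) hdiff 2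
    rw [huv] at h4
    linarith
  have hθle : θ ≤ Real.pi * ‖X - Y‖ := by
    have hsq : θ ^ 2 ≤ (Real.pi * ‖X - Y‖) ^ 2 := by
      calc θ ^ 2 ≤ Real.pi ^ 2 * ((1 - t) / 2) := hθsq
      _ ≤ Real.pi ^ 2 * ‖X - Y‖ ^ 2 := by
          apply mul_le_mul_of_nonneg_left h1t (sq_nonneg _)
      _ = (Real.pi * ‖X - Y‖) ^ 2 := by ring
    calc θ = Real.sqrt (θ ^ 2) := (Real.sqrt_sq hθ0).symm
    _ ≤ Real.sqrt ((Real.pi * ‖X - Y‖) ^ 2) := Real.sqrt_le_sqrt hsq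
    _ = Real.pi * ‖X - Y‖ := Real.sqrt_sq (by positivity)
  calc θ ≤ Real.pi * ‖X - Y‖ := hθle
  _ < Real.pi * (Real.sqrt n * δ) := by
      exact mul_lt_mul_of_pos_left hd Real.pi_pos
  _ ≤ Real.pi * (Real.sqrt n + 1) * δ := by
      nlinarith [Real.pi_pos, Real.sqrt_nonneg (n:ℝ)]
end
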